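/- Define ρ : M × M → [1, ∞) by ρ((y,x),(y',x')) = 1 + |y − y'| + 2 inf{ t ≥ 0 : Σᵢ e^{-2λᵢ(t + max(y,y'))}(xᵢ − x'ᵢ)² ≤ 1 } on M = ℝ × ℝᵈ with the Heintze metric g = dy² + Σᵢ e^{-2λᵢ y} dxᵢ². Then dist(p,q) ≤ ρ(p,q) for all p, q ∈ M. -/

import Mathlib

/-- Length of a differentiable path in the Heintze metric
`g = dy² + ∑ᵢ e^{-2λᵢ y} dxᵢ²`. -/
noncomputable def heintzeLength {d : ℕ} (lam : Fin d → ℝ)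
    (γ : ℝ → ℝ × (Fin d → ℝ)) : ℝ :=
  ∫ t in (0:ℝ)..1, Real.sqrt ((deriv (fun s => (γ s).1) t) ^ 2 +
    ∑ i, Real.exp (-2 * lam i * (γ t).1) * (deriv (fun s => (γ s).2 i) t) ^ 2)


open Real Filter Set Topology


section Aux

lemma expNegInvGlue_mono : Monotone expNegInvGlue := by
  intro x y hxy
  rcases le_or_gt y 0 with hy | hy
  · rw [expNegInvGlue.zero_of_nonpos (hxy.trans hy), expNegInvGlue.zero_of_nonpos hy]
  rcases le_or_gt x 0 with hx | hx
  · rw [expNegInvGlue.zero_of_nonpos hx]; exact expNegInvGlue.nonneg y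
  · unfold expNegInvGlue
    rw [if_neg hx.not_ge, if_neg hy.not_ge]
    have : y⁻¹ ≤ x⁻¹ := inv_anti₀ hx hxy
    exact Real.exp_le_exp.2 (by linarith)

lemma smoothTransition_mono : Monotone Real.smoothTransition := by
  intro x y hxy
  unfold Real.smoothTransition
  rw [div_le_div_iff₀ (Real.smoothTransition.pos_denom x) (Real.smoothTransition.pos_denom y)]
  have h1 := expNegInvGlue_mono hxy
  have h2 : expNegInvGlue (1 - y) ≤ expNegInvGlue (1 - x) := expNegInvGlue_mono (by linarith)
  nlinarith [expNegInvGlue.nonneg x, expNegInvGlue.nonneg (1 - y),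
    mul_le_mul h1 h2 (expNegInvGlue.nonneg (1 - y)) (expNegInvGlue.nonneg y)]

lemma psi_diff : Differentiable ℝ Real.smoothTransition :=
  (Real.smoothTransition.contDiff (n := 1)).differentiable (by norm_num)

lemma psi_deriv_cont : Continuous (deriv Real.smoothTransition) :=
  ((Real.smoothTransition.contDiff (n := (1:ℕ∞))).continuous_deriv le_rfl)

lemma hasDerivAt_zero_of_const_left {f : ℝ → ℝ} {l u : ℝ} (hf : HasDerivAt f l u)
    (h : ∀ v ≤ u, f v = f u) : l = 0 := by
  have h1 : Tendsto (slope f u) (𝓝[<] u) (𝓝 l) :=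
    (hasDerivAt_iff_tendsto_slope.1 hf).mono_left
      (nhdsWithin_mono _ (fun v hv => ne_of_lt hv))
  have h2 : Tendsto (slope f u) (𝓝[<] u) (𝓝 0) := by
    apply Tendsto.congr' _ tendsto_const_nhds
    filter_upwards [self_mem_nhdsWithin] with v hv
    simp [slope_def_field, h v (le_of_lt hv)]
  exact tendsto_nhds_unique h1 h2

lemma hasDerivAt_zero_of_const_right {f : ℝ → ℝ} {l u : ℝ} (hf : HasDerivAt f l u)
    (h : ∀ v, u ≤ v → f v = f u) : l = 0 := by
  have h1 : Tendsto (slope f u) (𝓝[>] u) (𝓝 l) :=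
    (hasDerivAt_iff_tendsto_slope.1 hf).mono_left
      (nhdsWithin_mono _ (fun v hv => ne_of_gt hv))
  have h2 : Tendsto (slope f u) (𝓝[>] u) (𝓝 0) := by
    apply Tendsto.congr' _ tendsto_const_nhds
    filter_upwards [self_mem_nhdsWithin] with v hv
    simp [slope_def_field, h v (le_of_lt hv)]
  exact tendsto_nhds_unique h1 h2

lemma psi_deriv_nonneg (u : ℝ) : 0 ≤ deriv Real.smoothTransition u := by
  have hd := hasDerivAt_iff_tendsto_slope.1 (psi_diff u).hasDerivAt
  refine ge_of_tendsto hd ?_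
  filter_upwards [self_mem_nhdsWithin] with v hv
  rcases lt_or_gt_of_ne hv with h | h
  · rw [slope_def_field]
    apply div_nonneg_of_nonpos
    · simp only [sub_nonpos]; exact smoothTransition_mono h.le
    · linarith
  · rw [slope_def_field]
    apply div_nonneg
    · simp only [sub_nonneg]; exact smoothTransition_mono h.le
    · linarith

lemma psi_deriv_of_nonpos {u : ℝ} (hu : u ≤ 0) : deriv Real.smoothTransition u = 0 :=
  hasDerivAt_zero_of_const_left (psi_diff u).hasDerivAt (fun v hv => by
    rw [Real.smoothTransition.zero_of_nonpos (hv.trans hu),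
      Real.smoothTransition.zero_of_nonpos hu])

lemma psi_deriv_of_one_le {u : ℝ} (hu : 1 ≤ u) : deriv Real.smoothTransition u = 0 :=
  hasDerivAt_zero_of_const_right (psi_diff u).hasDerivAt (fun v hv => by
    rw [Real.smoothTransition.one_of_one_le (hu.trans hv),
      Real.smoothTransition.one_of_one_le hu])

/-- helper: derivative of `s ↦ ψ (3 s - c)`. -/
lemma hasDerivAt_psi_affine (c s : ℝ) :
    HasDerivAt (fun s : ℝ => Real.smoothTransition (3 * s - c))
      (3 * deriv Real.smoothTransition (3 * s - c)) s := by
  have h := ((psi_diff (3 * s - c)).hasDerivAt).comp s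
    (((hasDerivAt_id s).const_mul 3).sub_const c)
  rw [show 3 * deriv Real.smoothTransition (3 * s - c)
    = deriv Real.smoothTransition (3 * s - c) * (3 * 1) by ring]
  exact h

end Aux

/-- Three-leg path: up by `a`, across, down by `b`. -/
noncomputable def threeLeg {d : ℕ} (y0 a b : ℝ) (x0 x1 : Fin d → ℝ) :
    ℝ → ℝ × (Fin d → ℝ) := fun s =>
  (y0 + a * Real.smoothTransition (3 * s - 0) - b * Real.smoothTransition (3 * s - 2),
   fun i => x0 i + (x1 i - x0 i) * Real.smoothTransition (3 * s - 1))

lemma threeLeg_fst_hasDerivAt {d : ℕ} (y0 a b : ℝ) (x0 x1 : Fin d → ℝ) (s : ℝ) :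
    HasDerivAt (fun s => (threeLeg y0 a b x0 x1 s).1)
      (a * (3 * deriv Real.smoothTransition (3 * s - 0))
        - b * (3 * deriv Real.smoothTransition (3 * s - 2))) s :=
  (((hasDerivAt_psi_affine 0 s).const_mul a).const_add y0).sub
    ((hasDerivAt_psi_affine 2 s).const_mul b)

lemma threeLeg_snd_hasDerivAt {d : ℕ} (y0 a b : ℝ) (x0 x1 : Fin d → ℝ) (i : Fin d) (s : ℝ) :
    HasDerivAt (fun s => (threeLeg y0 a b x0 x1 s).2 i)
      ((x1 i - x0 i) * (3 * deriv Real.smoothTransition (3 * s - 1))) s :=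
  ((hasDerivAt_psi_affine 1 s).const_mul (x1 i - x0 i)).const_add (x0 i)

lemma threeLeg_diff {d : ℕ} (y0 a b : ℝ) (x0 x1 : Fin d → ℝ) :
    Differentiable ℝ (threeLeg y0 a b x0 x1) := by
  intro s
  apply DifferentiableAt.prodMk
  · exact (threeLeg_fst_hasDerivAt y0 a b x0 x1 s).differentiableAt
  · exact differentiableAt_pi.2 fun i =>
      (threeLeg_snd_hasDerivAt y0 a b x0 x1 i s).differentiableAt

lemma threeLeg_zero {d : ℕ} (y0 a b : ℝ) (x0 x1 : Fin d → ℝ) :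
    threeLeg y0 a b x0 x1 0 = (y0, x0) := by
  have e0 : Real.smoothTransition (3 * (0:ℝ) - 0) = 0 :=
    Real.smoothTransition.zero_of_nonpos (by norm_num)
  have e1 : Real.smoothTransition (3 * (0:ℝ) - 1) = 0 :=
    Real.smoothTransition.zero_of_nonpos (by norm_num)
  have e2 : Real.smoothTransition (3 * (0:ℝ) - 2) = 0 :=
    Real.smoothTransition.zero_of_nonpos (by norm_num)
  unfold threeLeg
  rw [e0, e1, e2]
  simp

lemma threeLeg_one {d : ℕ} (y0 a b : ℝ) (x0 x1 : Fin d → ℝ) :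
    threeLeg y0 a b x0 x1 1 = (y0 + a - b, x1) := by
  have e0 : Real.smoothTransition (3 * (1:ℝ) - 0) = 1 :=
    Real.smoothTransition.one_of_one_le (by norm_num)
  have e1 : Real.smoothTransition (3 * (1:ℝ) - 1) = 1 :=
    Real.smoothTransition.one_of_one_le (by norm_num)
  have e2 : Real.smoothTransition (3 * (1:ℝ) - 2) = 1 :=
    Real.smoothTransition.one_of_one_le (by norm_num)
  unfold threeLeg
  rw [e0, e1, e2]
  simp

lemma heintzeLength_threeLeg_le {d : ℕ} (lam : Fin d → ℝ) (y0 a b : ℝ)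
    (x0 x1 : Fin d → ℝ) (ha : 0 ≤ a) (hb : 0 ≤ b)
    (hS : ∑ i, Real.exp (-2 * lam i * (y0 + a)) * (x1 i - x0 i) ^ 2 ≤ 1) :
    heintzeLength lam (threeLeg y0 a b x0 x1) ≤ a + 1 + b := by
  set γ := threeLeg y0 a b x0 x1 with hγ
  set D := deriv Real.smoothTransition with hD
  set F : ℝ → ℝ := fun t => Real.sqrt
    ((a * (3 * D (3 * t - 0)) - b * (3 * D (3 * t - 2))) ^ 2 +
      ∑ i, Real.exp (-2 * lam i * (γ t).1) *
        ((x1 i - x0 i) * (3 * D (3 * t - 1))) ^ 2) with hF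
  set G : ℝ → ℝ := fun t =>
    a * (3 * D (3 * t - 0)) + 3 * D (3 * t - 1) + b * (3 * D (3 * t - 2)) with hG
  have hYd : ∀ t, deriv (fun s => (γ s).1) t
      = a * (3 * D (3 * t - 0)) - b * (3 * D (3 * t - 2)) :=
    fun t => (threeLeg_fst_hasDerivAt y0 a b x0 x1 t).deriv
  have hXd : ∀ (i : Fin d) t, deriv (fun s => (γ s).2 i) t
      = (x1 i - x0 i) * (3 * D (3 * t - 1)) :=
    fun i t => (threeLeg_snd_hasDerivAt y0 a b x0 x1 i t).deriv
  have hlen : heintzeLength lam γ = ∫ t in (0:ℝ)..1, F t := by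
    unfold heintzeLength
    simp only [hYd, hXd, hF]
  -- continuity facts
  have hDc : Continuous D := psi_deriv_cont
  have hDaff : ∀ c : ℝ, Continuous fun t : ℝ => D (3 * t - c) := fun c =>
    hDc.comp (by fun_prop)
  have hYc : Continuous fun t => (γ t).1 := by
    have : (fun t => (γ t).1) = fun t => y0 + a * Real.smoothTransition (3 * t - 0)
        - b * Real.smoothTransition (3 * t - 2) := rfl
    rw [this]
    have hc := Real.smoothTransition.continuous
    fun_prop
  have hFc : Continuous F := by
    apply Continuous.sqrt
    apply Continuous.add
    · fun_prop
    · apply continuous_finset_sum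
      intro i _
      apply Continuous.mul
      · exact Real.continuous_exp.comp (continuous_const.mul hYc)
      · fun_prop
  have hGc : Continuous G := by fun_prop
  -- pointwise bound
  have key : ∀ t ∈ Icc (0:ℝ) 1, F t ≤ G t := by
    intro t ht
    have hDn : ∀ u : ℝ, 0 ≤ D u := psi_deriv_nonneg
    rcases le_or_gt t (1/3) with h1 | h1
    · have e1 : D (3 * t - 1) = 0 := psi_deriv_of_nonpos (by linarith)
      have e2 : D (3 * t - 2) = 0 := psi_deriv_of_nonpos (by linarith)
      have hnn : 0 ≤ a * (3 * D (3 * t)) :=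
        mul_nonneg ha (mul_nonneg (by norm_num) (hDn _))
      simp only [hF, hG, e1, e2, mul_zero, sub_zero, add_zero, zero_pow, ne_eq,
        OfNat.ofNat_ne_zero, not_false_eq_true, Finset.sum_const_zero]
      rw [Real.sqrt_sq hnn]
    · rcases le_or_gt t (2/3) with h2 | h2
      · have e0 : D (3 * t) = 0 := psi_deriv_of_one_le (by linarith)
        have e2 : D (3 * t - 2) = 0 := psi_deriv_of_nonpos (by linarith)
        have hY1 : (γ t).1 = y0 + a := by
          show y0 + a * Real.smoothTransition (3 * t - 0)
            - b * Real.smoothTransition (3 * t - 2) = y0 + a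
          rw [Real.smoothTransition.one_of_one_le (by linarith),
            Real.smoothTransition.zero_of_nonpos (by linarith)]
          ring
        have hsum : ∑ i, Real.exp (-2 * lam i * (γ t).1) *
            ((x1 i - x0 i) * (3 * D (3 * t - 1))) ^ 2
            = (3 * D (3 * t - 1)) ^ 2 *
              ∑ i, Real.exp (-2 * lam i * (y0 + a)) * (x1 i - x0 i) ^ 2 := by
          rw [hY1, Finset.mul_sum]
          exact Finset.sum_congr rfl fun i _ => by ring
        have hnn : (0:ℝ) ≤ 3 * D (3 * t - 1) :=
          mul_nonneg (by norm_num) (hDn _)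
        simp only [hF, hG]
        rw [hsum]
        simp only [sub_zero, e0, e2, mul_zero, sub_self, zero_pow, ne_eq,
          OfNat.ofNat_ne_zero, not_false_eq_true, zero_add, add_zero]
        rw [Real.sqrt_mul (sq_nonneg _), Real.sqrt_sq hnn]
        have hle : 3 * D (3 * t - 1) * Real.sqrt
            (∑ i, Real.exp (-2 * lam i * (y0 + a)) * (x1 i - x0 i) ^ 2)
            ≤ 3 * D (3 * t - 1) * 1 :=
          mul_le_mul_of_nonneg_left (Real.sqrt_le_one.2 hS) hnn
        linarith
      · have e0 : D (3 * t) = 0 := psi_deriv_of_one_le (by linarith)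
        have e1 : D (3 * t - 1) = 0 := psi_deriv_of_one_le (by linarith)
        have hnn : 0 ≤ b * (3 * D (3 * t - 2)) :=
          mul_nonneg hb (mul_nonneg (by norm_num) (hDn _))
        simp only [hF, hG, sub_zero, e0, e1, mul_zero, zero_sub, zero_add, add_zero,
          zero_pow, ne_eq, OfNat.ofNat_ne_zero, not_false_eq_true,
          Finset.sum_const_zero, neg_sq]
        rw [Real.sqrt_sq hnn]
  -- integrate
  have hFint : IntervalIntegrable F MeasureTheory.volume 0 1 :=
    hFc.intervalIntegrable 0 1
  have hGint : IntervalIntegrable G MeasureTheory.volume 0 1 :=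
    hGc.intervalIntegrable 0 1
  have hmono : (∫ t in (0:ℝ)..1, F t) ≤ ∫ t in (0:ℝ)..1, G t :=
    intervalIntegral.integral_mono_on (by norm_num) hFint hGint key
  have hGval : (∫ t in (0:ℝ)..1, G t) = a + 1 + b := by
    have hΦ : ∀ s ∈ uIcc (0:ℝ) 1, HasDerivAt (fun s : ℝ =>
        a * Real.smoothTransition (3 * s - 0) + Real.smoothTransition (3 * s - 1)
          + b * Real.smoothTransition (3 * s - 2)) (G s) s := by
      intro s _
      exact (((hasDerivAt_psi_affine 0 s).const_mul a).add
        (hasDerivAt_psi_affine 1 s)).add ((hasDerivAt_psi_affine 2 s).const_mul b)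
    rw [intervalIntegral.integral_eq_sub_of_hasDerivAt hΦ hGint]
    rw [Real.smoothTransition.one_of_one_le (by norm_num : (1:ℝ) ≤ 3 * 1 - 0),
      Real.smoothTransition.one_of_one_le (by norm_num : (1:ℝ) ≤ 3 * 1 - 1),
      Real.smoothTransition.one_of_one_le (by norm_num : (1:ℝ) ≤ 3 * 1 - 2),
      Real.smoothTransition.zero_of_nonpos (by norm_num : (3 * 0 - 0 : ℝ) ≤ 0),
      Real.smoothTransition.zero_of_nonpos (by norm_num : (3 * 0 - 1 : ℝ) ≤ 0),
      Real.smoothTransition.zero_of_nonpos (by norm_num : (3 * 0 - 2 : ℝ) ≤ 0)]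
    ring
  rw [hlen]
  linarith


/-- Riemannian distance in the Heintze metric. -/
noncomputable def heintzeDist {d : ℕ} (lam : Fin d → ℝ)
    (p q : ℝ × (Fin d → ℝ)) : ℝ :=
  sInf { L | ∃ γ : ℝ → ℝ × (Fin d → ℝ),
    Differentiable ℝ γ ∧ γ 0 = p ∧ γ 1 = q ∧ L = heintzeLength lam γ }

/-- The approximate distance
`ρ((y,x),(y',x')) = 1 + |y−y'| + 2 inf{t ≥ 0 : ∑ᵢ e^{-2λᵢ(t+max(y,y'))}(xᵢ−x'ᵢ)² ≤ 1}`. -/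
noncomputable def approxRho {d : ℕ} (lam : Fin d → ℝ)
    (p q : ℝ × (Fin d → ℝ)) : ℝ :=
  1 + |p.1 - q.1| + 2 * sInf { t : ℝ | 0 ≤ t ∧
    ∑ i, Real.exp (-2 * lam i * (t + max p.1 q.1)) * (p.2 i - q.2 i) ^ 2 ≤ 1 }

/-- `dist(p,q) ≤ ρ(p,q)` for all `p, q`. -/
theorem dist_le_approxRho (d : ℕ) (lam : Fin d → ℝ)
    (hpos : ∀ i, 0 < lam i) (hmono : Monotone lam)
    (p q : ℝ × (Fin d → ℝ)) :
    heintzeDist lam p q ≤ approxRho lam p q := by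
  classical
  set m := max p.1 q.1 with hm
  set S : ℝ → ℝ := fun t =>
    ∑ i, Real.exp (-2 * lam i * (t + m)) * (p.2 i - q.2 i) ^ 2 with hSdef
  set Tset : Set ℝ := { t : ℝ | 0 ≤ t ∧ S t ≤ 1 } with hTsetdef
  have hrho : approxRho lam p q = 1 + |p.1 - q.1| + 2 * sInf Tset := rfl
  -- the infimum is attained
  have hScont : Continuous S := by
    apply continuous_finset_sum
    intro i _
    exact (Real.continuous_exp.comp (by fun_prop)).mul continuous_const
  have htend : Tendsto S atTop (𝓝 0) := by
    have h0 : (0:ℝ) = ∑ i : Fin d, 0 := by simp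
    rw [hSdef, h0]
    apply tendsto_finset_sum
    intro i _
    have harg : Tendsto (fun t : ℝ => -2 * lam i * (t + m)) atTop atBot := by
      apply Tendsto.const_mul_atTop_of_neg (by nlinarith [hpos i])
      exact tendsto_atTop_add_const_right _ m tendsto_id
    simpa using (Real.tendsto_exp_atBot.comp harg).mul_const ((p.2 i - q.2 i) ^ 2)
  have hne : Tset.Nonempty := by
    have h1 : ∀ᶠ t in atTop, S t < 1 := htend.eventually_lt_const one_pos
    have h2 : ∀ᶠ t : ℝ in atTop, 0 ≤ t := eventually_ge_atTop 0
    obtain ⟨t, ht1, ht2⟩ := (h1.and h2).exists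
    exact ⟨t, ht2, ht1.le⟩
  have hbdd : BddBelow Tset := ⟨0, fun t ht => ht.1⟩
  have hclosed : IsClosed Tset := by
    have : Tset = {t : ℝ | 0 ≤ t} ∩ {t : ℝ | S t ≤ 1} := rfl
    rw [this]
    exact (isClosed_le continuous_const continuous_id).inter
      (isClosed_le hScont continuous_const)
  have hTmem := hclosed.csInf_mem hne hbdd
  set T := sInf Tset with hT
  obtain ⟨hT0, hST⟩ := hTmem
  -- the path
  have hap : p.1 ≤ m := le_max_left _ _
  have haq : q.1 ≤ m := le_max_right _ _
  set a := m + T - p.1 with hadef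
  set b := m + T - q.1 with hbdef
  have ha : 0 ≤ a := by simp [hadef]; linarith
  have hb : 0 ≤ b := by simp [hbdef]; linarith
  set γ := threeLeg p.1 a b p.2 q.2 with hγ
  have hγ0 : γ 0 = p := by rw [hγ, threeLeg_zero]
  have hγ1 : γ 1 = q := by
    rw [hγ, threeLeg_one, show p.1 + a - b = q.1 by rw [hadef, hbdef]; ring]
  have hSle : ∑ i, Real.exp (-2 * lam i * (p.1 + a)) * (q.2 i - p.2 i) ^ 2 ≤ 1 := by
    have harg : ∀ i : Fin d, -2 * lam i * (p.1 + a) = -2 * lam i * (T + m) := by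
      intro i; rw [hadef]; ring
    calc ∑ i, Real.exp (-2 * lam i * (p.1 + a)) * (q.2 i - p.2 i) ^ 2
        = S T := by
          rw [hSdef]
          exact Finset.sum_congr rfl fun i _ => by rw [harg i]; ring
      _ ≤ 1 := hST
  have hlen : heintzeLength lam γ ≤ a + 1 + b :=
    heintzeLength_threeLeg_le lam p.1 a b p.2 q.2 ha hb hSle
  -- conclude
  have hmem : heintzeLength lam γ ∈ { L | ∃ γ : ℝ → ℝ × (Fin d → ℝ),
      Differentiable ℝ γ ∧ γ 0 = p ∧ γ 1 = q ∧ L = heintzeLength lam γ } :=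
    ⟨γ, threeLeg_diff _ _ _ _ _, hγ0, hγ1, rfl⟩
  have hbdd2 : BddBelow { L | ∃ γ : ℝ → ℝ × (Fin d → ℝ),
      Differentiable ℝ γ ∧ γ 0 = p ∧ γ 1 = q ∧ L = heintzeLength lam γ } := by
    refine ⟨0, ?_⟩
    rintro L ⟨γ', -, -, -, rfl⟩
    exact intervalIntegral.integral_nonneg (by norm_num)
      (fun u _ => Real.sqrt_nonneg _)
  have habs : a + b = |p.1 - q.1| + 2 * T := by
    rcases le_total p.1 q.1 with h | h
    · rw [hadef, hbdef, abs_of_nonpos (by linarith), hm, max_eq_right h]; ring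
    · rw [hadef, hbdef, abs_of_nonneg (by linarith), hm, max_eq_left h]; ring
  calc heintzeDist lam p q ≤ heintzeLength lam γ := csInf_le hbdd2 hmem
    _ ≤ a + 1 + b := hlen
    _ = 1 + |p.1 - q.1| + 2 * T := by linarith
    _ = approxRho lam p q := by rw [hrho]
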